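/- Let n = (2m+1)k, x_1 < ... < x_n strictly increasing, with quantile positions q_r = m+1+(2m+1)(r-1). Suppose a sample y' has position set L = {ℓ_1 < ... < ℓ_k} agreeing with the quantile positions in the first i coordinates and ℓ_{i+1} > q_{i+1}. Let ℓ = ℓ_{i+1} - 1, and let y'' be the sample with position set (L \ {ℓ_{i+1}}) ∪ {ℓ} (assuming ℓ ∉ L). Then L1(x,y'') < L1(x,y'), where L1(x,y) = (1/n)∑_{i=1}^n |i/n - F_y(x_i)|. -/

import Mathlib

noncomputable def popCDF (n i : ℕ) : ℝ := (i : ℝ) / n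

noncomputable def sampCDF (k : ℕ) (L : Finset ℕ) (i : ℕ) : ℝ :=
  ((L.filter (fun l => l ≤ i)).card : ℝ) / k

noncomputable def L1stat (n k : ℕ) (L : Finset ℕ) : ℝ :=
  (1 / (n : ℝ)) * ∑ i ∈ Finset.Icc 1 n, |popCDF n i - sampCDF k L i|

lemma count_below {k : ℕ} (L : Finset ℕ) (hcard : L.card = k) (i : ℕ) (hik : i < k) :
    (L.filter (fun a => a < (L.orderIsoOfFin hcard ⟨i, hik⟩).val)).card = i := by
  conv_rhs => rw [← Finset.card_range i]
  apply Finset.card_bij (i := fun a ha =>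
    ((L.orderIsoOfFin hcard).symm ⟨a, (Finset.mem_filter.mp ha).1⟩ : Fin k).val)
  · intro a ha
    have h2 := (Finset.mem_filter.mp ha).2
    rw [Finset.mem_range]
    have : ((L.orderIsoOfFin hcard).symm ⟨a, (Finset.mem_filter.mp ha).1⟩) < ⟨i, hik⟩ := by
      rw [← OrderIso.lt_iff_lt (L.orderIsoOfFin hcard)]
      rw [OrderIso.apply_symm_apply]; exact h2
    exact this
  · intro a₁ h₁ a₂ h₂ heq
    have := Fin.val_injective heq
    have := (L.orderIsoOfFin hcard).symm.injective this
    simpa using this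
  · intro b hb
    have hb' : b < i := Finset.mem_range.mp hb
    refine ⟨((L.orderIsoOfFin hcard) ⟨b, lt_trans hb' hik⟩).val, ?_, ?_⟩
    · rw [Finset.mem_filter]
      refine ⟨((L.orderIsoOfFin hcard) _).2, ?_⟩
      exact_mod_cast (L.orderIsoOfFin hcard).lt_iff_lt.mpr
        (show (⟨b, lt_trans hb' hik⟩ : Fin k) < ⟨i, hik⟩ from hb')
    · have : (⟨((L.orderIsoOfFin hcard) ⟨b, lt_trans hb' hik⟩).val, _⟩ : {x // x ∈ L}) =
          (L.orderIsoOfFin hcard) ⟨b, lt_trans hb' hik⟩ := Subtype.ext rfl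
      rw [this, OrderIso.symm_apply_apply]

theorem stmt19 (m k n : ℕ) (hm : 1 ≤ m) (hk : 1 ≤ k) (hn : n = (2 * m + 1) * k)
    (x : ℕ → ℝ) (hx : StrictMonoOn x ↑(Finset.Icc 1 n))
    (L : Finset ℕ) (hsub : L ⊆ Finset.Icc 1 n) (hcard : L.card = k)
    (i : ℕ) (hik : i < k)
    (hagree : ∀ s : Fin k, (s : ℕ) < i →
      (L.orderIsoOfFin hcard s).val = m + 1 + (2 * m + 1) * (s : ℕ))
    (hgt : m + 1 + (2 * m + 1) * i < (L.orderIsoOfFin hcard ⟨i, hik⟩).val)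
    (hnotmem : (L.orderIsoOfFin hcard ⟨i, hik⟩).val - 1 ∉ L) :
    L1stat n k
        (insert ((L.orderIsoOfFin hcard ⟨i, hik⟩).val - 1)
          (L.erase ((L.orderIsoOfFin hcard ⟨i, hik⟩).val))) <
      L1stat n k L := by
  classical
  set ℓ₁ := (L.orderIsoOfFin hcard ⟨i, hik⟩).val with hℓ₁
  have hL1mem : ℓ₁ ∈ L := (L.orderIsoOfFin hcard ⟨i, hik⟩).2
  have hl1le : ℓ₁ ≤ n := (Finset.mem_Icc.mp (hsub hL1mem)).2
  set j₀ := ℓ₁ - 1 with hj₀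
  have hl1pos : m + 2 + (2 * m + 1) * i ≤ ℓ₁ := by omega
  have hj₀lt : j₀ < ℓ₁ := by omega
  have hj₀mem : j₀ ∈ Finset.Icc 1 n := by
    rw [Finset.mem_Icc]; omega
  have hcount : (L.filter (fun l => l ≤ j₀)).card = i := by
    have h := count_below L hcard i hik
    rw [← h]
    congr 1
    apply Finset.filter_congr
    intro a _
    simp only [← hℓ₁]
    constructor <;> (intro; omega)
  have hne1 : ℓ₁ ∉ L.filter (fun l => l ≤ j₀) :=
    fun hmem => absurd (Finset.mem_filter.mp hmem).2 (by omega)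
  have hcount' : ((insert j₀ (L.erase ℓ₁)).filter (fun l => l ≤ j₀)).card = i + 1 := by
    rw [Finset.filter_insert, if_pos le_rfl, Finset.filter_erase,
      Finset.erase_eq_of_notMem hne1,
      Finset.card_insert_of_notMem (fun hmem => hnotmem (Finset.mem_of_mem_filter _ hmem)),
      hcount]
  have key : ∀ j, j ≠ j₀ →
      ((insert j₀ (L.erase ℓ₁)).filter (fun l => l ≤ j)).card
        = (L.filter (fun l => l ≤ j)).card := by
    intro j hj
    rcases lt_or_gt_of_ne hj with hlt | hgt'
    · rw [Finset.filter_insert, if_neg (by omega), Finset.filter_erase,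
        Finset.erase_eq_of_notMem]
      intro hmem
      exact absurd (Finset.mem_filter.mp hmem).2 (by omega)
    · have hjℓ : ℓ₁ ≤ j := by omega
      have hmemf : ℓ₁ ∈ L.filter (fun l => l ≤ j) := Finset.mem_filter.mpr ⟨hL1mem, hjℓ⟩
      have hpos := Finset.card_pos.mpr ⟨ℓ₁, hmemf⟩
      rw [Finset.filter_insert, if_pos (by omega), Finset.filter_erase,
        Finset.card_insert_of_notMem
          (fun hmem => hnotmem (Finset.mem_filter.mp (Finset.mem_of_mem_erase hmem)).1),
        Finset.card_erase_of_mem hmemf]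
      omega
  have hk0 : (0:ℝ) < k := by exact_mod_cast hk
  have hnpos : 0 < n := by rw [hn]; exact Nat.mul_pos (by omega) hk
  have hn0 : (0:ℝ) < n := by exact_mod_cast hnpos
  have hnat : (2 * i + 1) * (2 * m + 1) < 2 * j₀ := by
    have e : (2 * i + 1) * (2 * m + 1) = 2 * ((2 * m + 1) * i) + 2 * m + 1 := by ring
    omega
  have hcastn : (n:ℝ) = (2*(m:ℝ)+1)*k := by rw [hn]; push_cast; ring
  have hnatR : (2*(i:ℝ)+1) * (2*(m:ℝ)+1) < 2*(j₀:ℝ) := by exact_mod_cast hnat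
  have hstrict : |popCDF n j₀ - sampCDF k (insert j₀ (L.erase ℓ₁)) j₀|
      < |popCDF n j₀ - sampCDF k L j₀| := by
    unfold popCDF sampCDF
    rw [hcount, hcount']
    push_cast
    have hab : (i:ℝ)/k < ((i:ℝ)+1)/k := by gcongr <;> linarith
    have h1 : ((i:ℝ) + ((i:ℝ)+1)) * n < 2*(j₀:ℝ) * k := by
      rw [hcastn]; nlinarith [hnatR, hk0]
    have hsum : (i:ℝ)/k + ((i:ℝ)+1)/k < 2 * ((j₀:ℝ)/n) := by
      rw [← add_div, mul_div_assoc' 2]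
      exact (div_lt_div_iff₀ hk0 hn0).mpr h1
    have hxa : (i:ℝ)/k < (j₀:ℝ)/n := by linarith
    have h2 : |(j₀:ℝ)/n - ((i:ℝ)+1)/k| < (j₀:ℝ)/n - (i:ℝ)/k :=
      abs_lt.mpr ⟨by linarith, by linarith⟩
    rw [show |(j₀:ℝ)/(n:ℝ) - (i:ℝ)/k| = (j₀:ℝ)/n - (i:ℝ)/k from abs_of_pos (by linarith)]
    exact h2
  have hsum_lt : ∑ j ∈ Finset.Icc 1 n, |popCDF n j - sampCDF k (insert j₀ (L.erase ℓ₁)) j|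
      < ∑ j ∈ Finset.Icc 1 n, |popCDF n j - sampCDF k L j| := by
    apply Finset.sum_lt_sum
    · intro j hj
      by_cases hje : j = j₀
      · subst hje; exact le_of_lt hstrict
      · have : sampCDF k (insert j₀ (L.erase ℓ₁)) j = sampCDF k L j := by
          unfold sampCDF; rw [key j hje]
        rw [this]
    · exact ⟨j₀, hj₀mem, hstrict⟩
  unfold L1stat
  exact mul_lt_mul_of_pos_left hsum_lt (one_div_pos.mpr hn0)
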